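/- Let D = max{|a|, |A|, |b|, |B|}. Then for every m ∈ ℕ with m ≥ 1, every n = ±(2m+1), every r ∈ ℤ_{≥0}, every admissible walk x ∈ X_n(r) (which necessarily has 2ν+1 steps with ν = m + r), and every z ∈ ℂ with |z| ≤ 1/2, one has |h⁺(x,z)| ≤ D^{2ν+1} · (2/m)^{ν}. -/

import Mathlib

open Finset

lemma count_aux (x : List ℤ) (h : ∀ s ∈ x, s = 2 ∨ s = -2) :
    x.length = x.count 2 + x.count (-2) ∧
    x.sum = 2 * (x.count 2 : ℤ) - 2 * (x.count (-2) : ℤ) := by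
  induction x with
  | nil => simp
  | cons hd tl ih =>
    obtain ⟨h1, h2⟩ := ih (fun s hs => h s (List.mem_cons_of_mem _ hs))
    rcases h hd List.mem_cons_self with rfl | rfl <;>
      constructor <;>
      simp [List.count_cons, h1, h2] <;> ring

lemma prod_pair (g : ℕ → ℂ) (ν : ℕ) :
    ∏ k ∈ Finset.range (2*ν), g k = ∏ i ∈ Finset.range ν, (g (2*i) * g (2*i+1)) := by
  induction ν with
  | zero => simp
  | succ n ih =>
    rw [Finset.prod_range_succ, ← ih, show 2*(n+1) = 2*n+1+1 by ring,
      Finset.prod_range_succ, Finset.prod_range_succ, mul_assoc]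

lemma pair_bound (m : ℕ) (hm : 1 ≤ m) (u v : ℤ) (hu : Even u) (hv : Even v)
    (hu0 : u ≠ 0) (hv0 : v ≠ 0) (huv : 4*(m:ℤ) ≤ |u + v|) (z : ℂ) (hz : ‖z‖ ≤ 1/2) :
    (m:ℝ)/2 ≤ ‖((u:ℂ) + z) * ((v:ℂ) + z)‖ := by
  have h2u : (2:ℤ) ≤ |u| := by
    obtain ⟨c, rfl⟩ := hu; rcases abs_cases (c + c) with ⟨h, _⟩ | ⟨h, _⟩ <;> omega
  have h2v : (2:ℤ) ≤ |v| := by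
    obtain ⟨d, rfl⟩ := hv; rcases abs_cases (d + d) with ⟨h, _⟩ | ⟨h, _⟩ <;> omega
  have hst : (4:ℤ)*m ≤ |u| + |v| := le_trans huv (abs_add_le _ _)
  have hbu : (|u|:ℝ) - 1/2 ≤ ‖(u:ℂ) + z‖ := by
    have h1 : ‖(u:ℂ)‖ ≤ ‖(u:ℂ) + z‖ + ‖z‖ := by
      calc ‖(u:ℂ)‖ = ‖(u:ℂ) + z + (-z)‖ := by rw [add_neg_cancel_right]
        _ ≤ ‖(u:ℂ) + z‖ + ‖-z‖ := norm_add_le _ _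
        _ = ‖(u:ℂ) + z‖ + ‖z‖ := by rw [norm_neg]
    have h2 : ‖(u:ℂ)‖ = (|u| : ℝ) := by simp [Complex.norm_intCast, Int.cast_abs]
    linarith
  have hbv : (|v|:ℝ) - 1/2 ≤ ‖(v:ℂ) + z‖ := by
    have h1 : ‖(v:ℂ)‖ ≤ ‖(v:ℂ) + z‖ + ‖z‖ := by
      calc ‖(v:ℂ)‖ = ‖(v:ℂ) + z + (-z)‖ := by rw [add_neg_cancel_right]
        _ ≤ ‖(v:ℂ) + z‖ + ‖-z‖ := norm_add_le _ _
        _ = ‖(v:ℂ) + z‖ + ‖z‖ := by rw [norm_neg]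
    have h2 : ‖(v:ℂ)‖ = (|v| : ℝ) := by simp [Complex.norm_intCast, Int.cast_abs]
    linarith
  rw [norm_mul]
  have s2 : (2:ℝ) ≤ (|u| : ℝ) := by exact_mod_cast h2u
  have t2 : (2:ℝ) ≤ (|v| : ℝ) := by exact_mod_cast h2v
  have st : (4:ℝ)*m ≤ (|u|:ℝ) + (|v|:ℝ) := by exact_mod_cast hst
  have hm' : (1:ℝ) ≤ m := by exact_mod_cast hm
  have hab : ((|u|:ℝ) - 1/2) * ((|v|:ℝ) - 1/2) ≤ ‖(u:ℂ) + z‖ * ‖(v:ℂ) + z‖ :=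
    mul_le_mul hbu hbv (by linarith) (by linarith [norm_nonneg ((u:ℂ)+z)])
  nlinarith [mul_nonneg (by linarith : (0:ℝ) ≤ (|u|:ℝ) - 2) (by linarith : (0:ℝ) ≤ (|v|:ℝ) - 1/2),
    mul_nonneg (by linarith : (0:ℝ) ≤ (|v|:ℝ) - 2) (by linarith : (0:ℝ) ≤ (|u|:ℝ) - 1/2)]

lemma take_sum_succ (x : List ℤ) (k : ℕ) (hk : k < x.length) :
    (x.take (k+1)).sum = (x.take k).sum + x.getD k 0 := by
  rw [List.take_succ, List.sum_append, List.getD_eq_getElem x 0 hk]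
  simp [List.getElem?_eq_getElem hk]


noncomputable section

/-- Coefficient function `p`: `p(2) = A`, `p(-2) = a`. -/
def pc (a A : ℂ) (w : ℤ) : ℂ := if w = 2 then A else if w = -2 then a else 0

/-- Coefficient function `q`: `q(2) = B`, `q(-2) = b`. -/
def qc (b B : ℂ) (w : ℤ) : ℂ := if w = 2 then B else if w = -2 then b else 0

/-- Vertex `j_k = -n + x_1 + ⋯ + x_k` of a walk `x` starting at `-n`. -/
def vtx (n : ℤ) (x : List ℤ) (k : ℕ) : ℤ := -n + (x.take k).sum

/-- An admissible walk from `-n` to `n`: odd length, steps in `{-2, 2}`, total sum `2n`,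
and the vertices `j_k` (for `1 ≤ k < length`) satisfy `j_k ≠ n` for odd `k` and
`j_k ≠ -n` for even `k`. -/
def AdmX (n : ℤ) (x : List ℤ) : Prop :=
  Odd x.length ∧ (∀ s ∈ x, s = 2 ∨ s = -2) ∧ x.sum = 2 * n ∧
    ∀ k : ℕ, 1 ≤ k → k < x.length →
      (Odd k → vtx n x k ≠ n) ∧ (Even k → vtx n x k ≠ -n)

/-- `X_n(r)`: admissible walks from `-n` to `n` with exactly `r` negative steps if `n > 0`,
resp. exactly `r` positive steps if `n < 0`. -/
def Xw (n : ℤ) (r : ℕ) : Set (List ℤ) :=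
  {x | AdmX n x ∧ (0 < n → x.count (-2) = r) ∧ (n < 0 → x.count 2 = r)}

/-- Numerator of `h⁺`: `q(x_1) p(x_2) q(x_3) ⋯ p(x_{2ν}) q(x_{2ν+1})`. -/
def numX (a A b B : ℂ) (x : List ℤ) : ℂ :=
  ∏ t ∈ Finset.range x.length,
    (if t % 2 = 0 then qc b B (x.getD t 0) else pc a A (x.getD t 0))

/-- Denominator of `h⁺`: the product of the factors `(n - j_k + z)` for odd `k` and
`(n + j_k + z)` for even `k`, `1 ≤ k ≤ 2ν`. -/
def denX (n : ℤ) (x : List ℤ) (z : ℂ) : ℂ :=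
  ∏ k ∈ Finset.Icc 1 (x.length - 1),
    (if k % 2 = 1 then ((n : ℂ) - (vtx n x k : ℂ) + z) else ((n : ℂ) + (vtx n x k : ℂ) + z))

/-- `h⁺(x, z)`. -/
def hX (a A b B : ℂ) (n : ℤ) (x : List ℤ) (z : ℂ) : ℂ := numX a A b B x / denX n x z

/-- `σ⁺_r(n, z) = ∑_{x ∈ X_n(r)} h⁺(x, z)`. -/
def sigmaX (a A b B : ℂ) (n : ℤ) (r : ℕ) (z : ℂ) : ℂ :=
  ∑' x : Xw n r, hX a A b B n (x : List ℤ) z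

/-- `β⁺_n(z) = ∑_{r=0}^∞ σ⁺_r(n, z)`. -/
def betaX (a A b B : ℂ) (n : ℤ) (z : ℂ) : ℂ := ∑' r : ℕ, sigmaX a A b B n r z

/-- With `D = max {|a|, |A|, |b|, |B|}`: for `m ≥ 1`, `n = ±(2m+1)`, `r ∈ ℤ_{≥0}`,
every admissible walk `x ∈ X_n(r)` (which has `2ν + 1` steps, `ν = m + r`) and every
`z ∈ ℂ` with `|z| ≤ 1/2`, one has `|h⁺(x, z)| ≤ D^(2ν+1) (2/m)^ν`. -/
theorem stmt2 (a A b B : ℂ) (ha : a ≠ 0) (hA : A ≠ 0) (hb : b ≠ 0) (hB : B ≠ 0)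
    (D : ℝ) (hD : D = max (max ‖a‖ ‖A‖) (max ‖b‖ ‖B‖))
    (m : ℕ) (hm : 1 ≤ m) (n : ℤ) (hn : n = 2 * m + 1 ∨ n = -(2 * m + 1))
    (r : ℕ) (x : List ℤ) (hx : x ∈ Xw n r) (z : ℂ) (hz : ‖z‖ ≤ 1 / 2) :
    ‖hX a A b B n x z‖ ≤ D ^ (2 * (m + r) + 1) * (2 / (m : ℝ)) ^ (m + r) := by
  obtain ⟨⟨hodd, hsteps, hsum, hvert⟩, hpos, hneg⟩ := hx
  obtain ⟨hlen, hsum2⟩ := count_aux x hsteps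
  have hL : x.length = 2*(m+r) + 1 := by
    rcases hn with hn1 | hn1
    · have hc := hpos (by rw [hn1]; omega)
      rw [hn1] at hsum; omega
    · have hc := hneg (by rw [hn1]; omega)
      rw [hn1] at hsum; omega
  have hD0 : 0 < D := by
    have h0 : (0:ℝ) < ‖a‖ := norm_pos_iff.mpr ha
    rw [hD]
    exact lt_of_lt_of_le h0 (le_trans (le_max_left _ _) (le_max_left _ _))
  have hnum : ‖numX a A b B x‖ ≤ D ^ x.length := by
    rw [numX, norm_prod]
    calc ∏ t ∈ range x.length, ‖if t % 2 = 0 then qc b B (x.getD t 0) else pc a A (x.getD t 0)‖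
        ≤ ∏ _t ∈ range x.length, D := by
          refine Finset.prod_le_prod (fun i _ => norm_nonneg _) (fun t ht => ?_)
          rw [Finset.mem_range] at ht
          have hmem : x.getD t 0 = 2 ∨ x.getD t 0 = -2 := by
            rw [List.getD_eq_getElem x 0 ht]
            exact hsteps _ (List.getElem_mem ht)
          have ha' : ‖a‖ ≤ D := hD ▸ le_trans (le_max_left _ _) (le_max_left _ _)
          have hA' : ‖A‖ ≤ D := hD ▸ le_trans (le_max_right _ _) (le_max_left _ _)
          have hb' : ‖b‖ ≤ D := hD ▸ le_trans (le_max_left _ _) (le_max_right _ _)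
          have hB' : ‖B‖ ≤ D := hD ▸ le_trans (le_max_right _ _) (le_max_right _ _)
          rcases hmem with h | h <;> split <;> simp only [pc, qc, h] <;> norm_num <;> assumption
      _ = D ^ x.length := by rw [Finset.prod_const, Finset.card_range]
  have hden : ((m:ℝ)/2) ^ (m+r) ≤ ‖denX n x z‖ := by
    unfold denX
    have e1 : Finset.Icc 1 (x.length - 1) = Finset.Ico 1 (2*(m+r)+1) := by
      rw [hL, Nat.add_sub_cancel, Finset.Ico_add_one_right_eq_Icc]
    rw [e1, Finset.prod_Ico_eq_prod_range, Nat.add_sub_cancel,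
      prod_pair _ (m+r), norm_prod]
    calc ((m:ℝ)/2)^(m+r) = ∏ _i ∈ range (m+r), ((m:ℝ)/2) := by
          rw [Finset.prod_const, Finset.card_range]
      _ ≤ _ := by
          refine Finset.prod_le_prod (fun i _ => by positivity) (fun i hi => ?_)
          rw [Finset.mem_range] at hi
          have hk1 : 1 + 2*i < x.length := by omega
          have hk2 : 1 + (2*i+1) < x.length := by omega
          have hk2' : 1 + 2*i + 1 < x.length := by omega
          have hstep : (x.take (1 + 2*i + 1)).sum = (x.take (1 + 2*i)).sum + x.getD (1 + 2*i) 0 :=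
            take_sum_succ x (1 + 2*i) hk1
          have hel : x.getD (1 + 2*i) 0 = 2 ∨ x.getD (1 + 2*i) 0 = -2 := by
            rw [List.getD_eq_getElem x 0 hk1]
            exact hsteps _ (List.getElem_mem hk1)
          obtain ⟨-, hPS1⟩ := count_aux (x.take (1 + 2*i))
            (fun s hs => hsteps s (List.take_subset _ _ hs))
          obtain ⟨-, hPS2⟩ := count_aux (x.take (1 + (2*i+1)))
            (fun s hs => hsteps s (List.take_subset _ _ hs))
          have hv1 : vtx n x (1 + 2*i) ≠ n := (hvert (1 + 2*i) (by omega) hk1).1 ⟨i, by ring⟩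
          have hv2 : vtx n x (1 + (2*i+1)) ≠ -n :=
            (hvert (1 + (2*i+1)) (by omega) hk2).2 ⟨i+1, by ring⟩
          have hvtx1 : vtx n x (1 + 2*i) = -n + (x.take (1 + 2*i)).sum := rfl
          have hvtx2 : vtx n x (1 + (2*i+1)) = -n + (x.take (1 + (2*i+1))).sum := rfl
          have heq : (if (1 + 2*i) % 2 = 1 then ((n : ℂ) - (vtx n x (1 + 2*i) : ℂ) + z)
                else ((n : ℂ) + (vtx n x (1 + 2*i) : ℂ) + z)) *
              (if (1 + (2*i+1)) % 2 = 1 then ((n : ℂ) - (vtx n x (1 + (2*i+1)) : ℂ) + z)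
                else ((n : ℂ) + (vtx n x (1 + (2*i+1)) : ℂ) + z)) =
              (((n - vtx n x (1 + 2*i) : ℤ) : ℂ) + z) *
              (((n + vtx n x (1 + (2*i+1)) : ℤ) : ℂ) + z) := by
            rw [if_pos (by omega : (1 + 2*i) % 2 = 1),
              if_neg (by omega : ¬ (1 + (2*i+1)) % 2 = 1)]
            push_cast
            ring
          rw [heq]
          refine pair_bound m hm _ _ ?_ ?_ ?_ ?_ ?_ z hz
          · exact ⟨n - ((x.take (1 + 2*i)).count 2 : ℤ) + ((x.take (1 + 2*i)).count (-2) : ℤ),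
              by rw [hvtx1]; omega⟩
          · exact ⟨((x.take (1 + (2*i+1))).count 2 : ℤ) - ((x.take (1 + (2*i+1))).count (-2) : ℤ),
              by rw [hvtx2]; omega⟩
          · omega
          · omega
          · have e2 : (n - vtx n x (1 + 2*i)) + (n + vtx n x (1 + (2*i+1))) =
                2*n + x.getD (1 + 2*i) 0 := by
              rw [hvtx1, hvtx2]
              have : (1 + (2*i+1)) = (1 + 2*i) + 1 := by omega
              rw [this, hstep]; ring
            rw [e2]
            rcases abs_cases ((2:ℤ)*n + x.getD (1 + 2*i) 0) with ⟨h1, _⟩ | ⟨h1, _⟩ <;>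
              rcases hn with hn1 | hn1 <;> rcases hel with h | h <;> omega
  have hdenpos : (0:ℝ) < ((m:ℝ)/2)^(m+r) := by
    have h1 : (1:ℝ) ≤ m := by exact_mod_cast hm
    positivity
  rw [hX, norm_div]
  calc ‖numX a A b B x‖ / ‖denX n x z‖ ≤ D ^ x.length / ((m:ℝ)/2)^(m+r) :=
      div_le_div₀ (pow_nonneg hD0.le _) hnum hdenpos hden
    _ = D ^ (2*(m+r)+1) * (2/(m:ℝ))^(m+r) := by
      rw [hL, div_eq_mul_inv, ← inv_pow, inv_div]
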